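/- Let g_a, g_b ∈ ℝ^d, p_a, p_b ∈ [0,1] with p_a + p_b = 1, and set g = p_a·g_a + p_b·g_b. Suppose ‖g_a‖·p_a·(1 − p_a/2) ≥ (5/2)·C + ‖g_b‖·(1 + p_b + p_b²/2) for some C > 0. Then for any vector ḡ ∈ ℝ^d that is a convex-type combination ḡ = p_a·ḡ_a + p_b·ḡ_b with ‖ḡ_a‖ ≤ C and ‖ḡ_b‖ ≤ C, we have ⟨g_a − g_b, g − ḡ⟩ − (1/2)(‖g‖² + C²) ≥ (C/2)·(‖g_a‖ − C) > 0. -/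
import Mathlib


open scoped RealInnerProductSpace

set_option maxHeartbeats 1000000 in
/-- deterministic core of Theorem 3 (gradient clipping). -/
theorem clipping_excessive_risk_core {d : ℕ}
    (ga gb : EuclideanSpace ℝ (Fin d)) (pa pb C : ℝ)
    (hpa : pa ∈ Set.Icc (0 : ℝ) 1) (hpb : pb ∈ Set.Icc (0 : ℝ) 1)
    (hp : pa + pb = 1) (hC : 0 < C)
    (hmain : ‖ga‖ * pa * (1 - pa / 2)
      ≥ (5 / 2) * C + ‖gb‖ * (1 + pb + pb ^ 2 / 2))
    (gab gbb : EuclideanSpace ℝ (Fin d)) (hga : ‖gab‖ ≤ C) (hgb : ‖gbb‖ ≤ C) :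
    ⟪ga - gb, (pa • ga + pb • gb) - (pa • gab + pb • gbb)⟫
        - (1 / 2) * (‖pa • ga + pb • gb‖ ^ 2 + C ^ 2)
      ≥ (C / 2) * (‖ga‖ - C) ∧
    (C / 2) * (‖ga‖ - C) > 0 := by
  obtain ⟨hpa0, hpa1⟩ := hpa
  obtain ⟨hpb0, hpb1⟩ := hpb
  have hA0 : (0:ℝ) ≤ ‖ga‖ := norm_nonneg _
  have hB0 : (0:ℝ) ≤ ‖gb‖ := norm_nonneg _
  have ht : |⟪ga, gb⟫| ≤ ‖ga‖ * ‖gb‖ := abs_real_inner_le_norm ga gb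
  have ht1 : -(‖ga‖ * ‖gb‖) ≤ ⟪ga, gb⟫ := neg_le_of_abs_le ht
  have ht2 : ⟪ga, gb⟫ ≤ ‖ga‖ * ‖gb‖ := le_of_abs_le ht
  have hAbig : ‖ga‖ ≥ 5*C + 2*‖gb‖*(1 + pb + pb^2/2) := by
    nlinarith [mul_nonneg hA0 (sq_nonneg (1 - pa))]
  have hA2B : ‖ga‖ ≥ 2*‖gb‖ := by
    nlinarith [mul_nonneg hB0 hpb0, mul_nonneg (mul_nonneg hB0 hpb0) hpb0]
  have hAC : C < ‖ga‖ := by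
    nlinarith [mul_nonneg hB0 hpb0, mul_nonneg (mul_nonneg hB0 hpb0) hpb0]
  have hpos : (C / 2) * (‖ga‖ - C) > 0 :=
    mul_pos (by linarith) (by linarith)
  refine ⟨?_, hpos⟩
  have hX : ⟪ga - gb, pa • ga + pb • gb⟫
      = pa*‖ga‖^2 + (pb - pa)*⟪ga, gb⟫ - pb*‖gb‖^2 := by
    simp only [inner_sub_left, inner_add_right, real_inner_smul_right,
      real_inner_self_eq_norm_sq, real_inner_comm gb ga]
    ring
  have hnorm : ‖pa • ga + pb • gb‖^2
      = pa^2*‖ga‖^2 + 2*pa*pb*⟪ga, gb⟫ + pb^2*‖gb‖^2 := by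
    rw [@norm_add_sq_real]
    simp only [norm_smul, real_inner_smul_left, real_inner_smul_right,
      Real.norm_of_nonneg hpa0, Real.norm_of_nonneg hpb0]
    ring
  have hYnorm : ‖pa • gab + pb • gbb‖ ≤ C := by
    calc ‖pa • gab + pb • gbb‖ ≤ ‖pa • gab‖ + ‖pb • gbb‖ := norm_add_le _ _
      _ ≤ pa * C + pb * C := by
          rw [norm_smul, norm_smul, Real.norm_of_nonneg hpa0, Real.norm_of_nonneg hpb0]
          exact add_le_add (mul_le_mul_of_nonneg_left hga hpa0)
            (mul_le_mul_of_nonneg_left hgb hpb0)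
      _ = C := by rw [← add_mul, hp, one_mul]
  have hY : ⟪ga - gb, pa • gab + pb • gbb⟫ ≤ (‖ga‖ + ‖gb‖) * C := by
    calc ⟪ga - gb, pa • gab + pb • gbb⟫ ≤ ‖ga - gb‖ * ‖pa • gab + pb • gbb‖ :=
          real_inner_le_norm _ _
      _ ≤ (‖ga‖ + ‖gb‖) * C :=
          mul_le_mul (norm_sub_le _ _) hYnorm (norm_nonneg _) (by positivity)
  rw [inner_sub_right, hX, hnorm]
  have hceq : pb - pa - pa*pb = pb^2 + pb - 1 := by
    have : pa = 1 - pb := by linarith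
    rw [this]; ring
  have hct : (pb - pa - pa*pb) * ⟪ga, gb⟫ ≥ -(‖ga‖*‖gb‖) := by
    rw [hceq]
    nlinarith [mul_nonneg (mul_nonneg hpb0 (by linarith : (0:ℝ) ≤ 1 + pb))
        (by linarith : (0:ℝ) ≤ ‖ga‖*‖gb‖ + ⟪ga, gb⟫),
      mul_nonneg (by nlinarith : (0:ℝ) ≤ 2 - pb - pb^2)
        (by linarith : (0:ℝ) ≤ ‖ga‖*‖gb‖ - ⟪ga, gb⟫)]
  have hm2 : ‖ga‖ * (‖ga‖ * pa * (1 - pa/2))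
      ≥ ‖ga‖ * ((5/2)*C + ‖gb‖*(1+pb+pb^2/2)) :=
    mul_le_mul_of_nonneg_left hmain hA0
  nlinarith [hY, hct, hm2,
    mul_nonneg hC.le (by linarith : (0:ℝ) ≤ ‖ga‖ - 2*‖gb‖),
    mul_nonneg (mul_nonneg hB0 hpb0) (by linarith : (0:ℝ) ≤ ‖ga‖ - 2*‖gb‖),
    mul_nonneg (mul_nonneg (mul_nonneg hB0 hpb0) hpb0)
      (by linarith : (0:ℝ) ≤ ‖ga‖ - 2*‖gb‖),
    mul_nonneg (mul_nonneg hB0 hB0) hpb0,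
    mul_nonneg (mul_nonneg (mul_nonneg hB0 hB0) hpb0) hpb0]
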